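/- Let G be a non-complete double-critical k-chromatic graph. For every vertex x of G that is not adjacent to all other vertices of G, the subgraph of G induced by the neighbourhood N(x) has chromatic number at most k − 3. -/

import Mathlib

open SimpleGraph

/-- A graph is vertex-critical if deleting any vertex decreases the chromatic number. -/
def VertexCritical {V : Type} (G : SimpleGraph V) : Prop :=
  ∀ v : V, (G.induce ({v}ᶜ : Set V)).chromaticNumber < G.chromaticNumber

/-- A vertex-critical graph is double-critical if deleting the two end-vertices of any
edge decreases the chromatic number by at least two. -/
def DoubleCritical {V : Type} (G : SimpleGraph V) : Prop :=
  VertexCritical G ∧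
  ∀ x y : V, G.Adj x y →
    (G.induce ({x, y}ᶜ : Set V)).chromaticNumber + 2 ≤ G.chromaticNumber


/-- extract a `(k-2)`-colorability from the double-criticality inequality -/
lemma aux_colorable_sub2 {W : Type} (H : SimpleGraph W) (k : ℕ)
    (h : H.chromaticNumber + 2 ≤ (k:ℕ∞)) : H.Colorable (k-2) := by
  have h2' : (2:ℕ) ≤ k := by exact_mod_cast le_trans (by simp : (2:ℕ∞) ≤ H.chromaticNumber + 2) h
  have : H.chromaticNumber ≤ (k:ℕ∞) - 2 := ENat.le_sub_of_add_le_left (by simp) (by rwa [add_comm])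
  rw [show ((k:ℕ∞) - 2) = ((k-2 : ℕ) : ℕ∞) by push_cast [Nat.cast_sub h2']; rfl] at this
  exact chromaticNumber_le_iff_colorable.mp this

lemma aux_colorable_sub1 {W : Type} (H : SimpleGraph W) (k : ℕ)
    (h : H.chromaticNumber < (k:ℕ∞)) : H.Colorable (k-1) := by
  have hne : H.chromaticNumber ≠ ⊤ := (lt_of_lt_of_le h le_top).ne
  have h1 : H.chromaticNumber + 1 ≤ (k:ℕ∞) := (ENat.add_one_le_iff hne).mpr h
  have h1' : (1:ℕ) ≤ k := by
    by_contra hk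
    interval_cases k
    simpa using lt_of_le_of_lt zero_le h
  have : H.chromaticNumber ≤ (k:ℕ∞) - 1 := ENat.le_sub_of_add_le_left (by simp) (by rwa [add_comm])
  rw [show ((k:ℕ∞) - 1) = ((k-1 : ℕ) : ℕ∞) by push_cast [Nat.cast_sub h1']; rfl] at this
  exact chromaticNumber_le_iff_colorable.mp this

theorem stmt9 {V : Type} [Fintype V] (G : SimpleGraph V) (k : ℕ)
    (hnc : G ≠ ⊤) (hdc : DoubleCritical G) (hchrom : G.chromaticNumber = k)
    (x : V) (hx : ∃ z : V, z ≠ x ∧ ¬ G.Adj x z) :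
    (G.induce (G.neighborSet x)).chromaticNumber ≤ (k - 3 : ℕ) := by
  classical
  obtain ⟨z, hzx, hxz⟩ := hx
  by_cases hA : ∃ w, G.Adj z w ∧ ¬ G.Adj x w ∧ w ≠ x
  · -- Case A : z has a neighbour w outside N(x) ∪ {x}
    obtain ⟨w, hzw, hxw, hwx⟩ := hA
    have h2 := hdc.2 z w hzw
    rw [hchrom] at h2
    obtain C := (aux_colorable_sub2 _ k h2).some
    have hxmem : x ∈ ({z, w}ᶜ : Set V) := by
      simp only [Set.mem_compl_iff, Set.mem_insert_iff, Set.mem_singleton_iff]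
      push_neg
      exact ⟨hzx.symm, hwx.symm⟩
    set α := C ⟨x, hxmem⟩ with hα
    have hk2pos : 0 < k - 2 := α.pos
    have hmem : ∀ v : V, G.Adj x v → v ∈ ({z, w}ᶜ : Set V) := by
      intro v hv
      simp only [Set.mem_compl_iff, Set.mem_insert_iff, Set.mem_singleton_iff]
      push_neg
      constructor
      · rintro rfl; exact hxz hv
      · rintro rfl; exact hxw hv
    let D : (G.induce (G.neighborSet x)).Coloring {β : Fin (k-2) // β ≠ α} :=
      Coloring.mk
        (fun v => ⟨C ⟨v.1, hmem v.1 v.2⟩, by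
          have : G.Adj v.1 x := (v.2 : G.Adj x v.1).symm
          exact C.valid (by exact this)⟩)
        (by
          rintro ⟨a, ha⟩ ⟨b, hb⟩ hab hEq
          exact C.valid (by exact (hab : G.Adj a b)) (Subtype.ext_iff.mp hEq))
    have hcard : Fintype.card {β : Fin (k-2) // β ≠ α} = k - 3 := by
      simp only [ne_eq]
      rw [Fintype.card_subtype_compl]
      simp [Fintype.card_subtype_eq]
      omega
    have := D.colorable.chromaticNumber_le
    rw [hcard] at this
    exact this
  · -- Case B : every neighbour of z is a neighbour of x — derive a contradiction
    exfalso
    push_neg at hA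
    have hNz : ∀ w, G.Adj z w → G.Adj x w := by
      intro w hw
      by_contra hxw
      exact hxz ((hA w hw hxw ▸ hw).symm)
    by_cases hy : ∃ y, G.Adj z y
    · obtain ⟨y, hzy⟩ := hy
      have hxy : G.Adj x y := hNz y hzy
      have h2 := hdc.2 z y hzy
      rw [hchrom] at h2
      have h2' : (2:ℕ) ≤ k := by
        exact_mod_cast le_trans (by simp : (2:ℕ∞) ≤ _ + 2) h2
      obtain C := (aux_colorable_sub2 _ k h2).some
      have hmem : ∀ v : V, v ≠ z → v ≠ y → v ∈ ({z, y}ᶜ : Set V) := by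
        intro v h1 h3
        simp only [Set.mem_compl_iff, Set.mem_insert_iff, Set.mem_singleton_iff]
        push_neg
        exact ⟨h1, h3⟩
      have hxz' : x ≠ z := fun h => hzx h.symm
      have hxy' : x ≠ y := hxy.ne
      -- color G with (k-2)+1 colors
      let D : G.Coloring (Fin (k-2+1)) :=
        Coloring.mk
          (fun v =>
            if hvz : v = z then (C ⟨x, hmem x hxz' hxy'⟩).castSucc
            else if hvy : v = y then Fin.last _
            else (C ⟨v, hmem v hvz hvy⟩).castSucc)
          (by
            intro a b hab
            by_cases haz : a = z
            · by_cases hbz : b = z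
              · exact absurd hab (by rw [haz, hbz]; exact G.loopless.irrefl z)
              · simp only [dif_pos haz, dif_neg hbz]
                have hab' : G.Adj z b := by rwa [haz] at hab
                have hxb : G.Adj x b := hNz b hab' 
                by_cases hby : b = y
                · simp only [dif_pos hby]; exact (Fin.castSucc_lt_last _).ne
                · simp only [dif_neg hby]
                  exact fun h => C.valid
                    (by exact hxb : (G.induce _).Adj ⟨x, _⟩ ⟨b, _⟩)
                    (Fin.castSucc_injective _ h)
            · by_cases hbz : b = z
              · simp only [dif_neg haz, dif_pos hbz]
                have hab' : G.Adj a z := by rwa [hbz] at hab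
                have hxa : G.Adj x a := hNz a hab'.symm
                by_cases hay : a = y
                · simp only [dif_pos hay]; exact (Fin.castSucc_lt_last _).ne'
                · simp only [dif_neg hay]
                  exact fun h => C.valid
                    (by exact hxa.symm : (G.induce _).Adj ⟨a, _⟩ ⟨x, _⟩)
                    (Fin.castSucc_injective _ h)
              · simp only [dif_neg haz, dif_neg hbz]
                by_cases hay : a = y <;> by_cases hby : b = y
                · exact absurd hab (by rw [hay, hby]; exact G.loopless.irrefl y)
                · simp only [dif_pos hay, dif_neg hby]; exact (Fin.castSucc_lt_last _).ne'
                · simp only [dif_neg hay, dif_pos hby]; exact (Fin.castSucc_lt_last _).ne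
                · simp only [dif_neg hay, dif_neg hby]
                  exact fun h => C.valid
                    (by exact hab : (G.induce _).Adj ⟨a, _⟩ ⟨b, _⟩)
                    (Fin.castSucc_injective _ h))
      have hcol := D.colorable
      rw [Fintype.card_fin] at hcol
      have hle := hcol.chromaticNumber_le
      rw [hchrom] at hle
      have : (k:ℕ) ≤ k - 2 + 1 := by exact_mod_cast hle
      omega
    · -- z is isolated
      push_neg at hy
      have h1 := hdc.1 z
      rw [hchrom] at h1
      obtain C := (aux_colorable_sub1 _ k h1).some
      have hxmem : x ∈ ({z}ᶜ : Set V) := fun h => hzx (Set.mem_singleton_iff.mp h).symm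
      let D : G.Coloring (Fin (k-1)) :=
        Coloring.mk
          (fun v => if hvz : v = z then C ⟨x, hxmem⟩ else C ⟨v, hvz⟩)
          (by
            intro a b hab
            have haz : a ≠ z := fun h => hy b (h ▸ hab)
            have hbz : b ≠ z := fun h => hy a (h ▸ hab.symm)
            simp only [dif_neg haz, dif_neg hbz]
            exact C.valid (by exact hab))
      have hcol := D.colorable
      rw [Fintype.card_fin] at hcol
      have hle := hcol.chromaticNumber_le
      rw [hchrom] at hle
      have hk1 : (k:ℕ) ≤ k - 1 := by exact_mod_cast hle
      have hk0 : k ≠ 0 := by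
        intro h; rw [h] at h1; simpa using lt_of_le_of_lt zero_le h1
      omega
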